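/- Let q be a prime power and let C ⊆ 𝔽_q^{n×m} be a rank-metric code of dimension k ≥ 1. Then for every integer r with 1 ≤ r ≤ k one has d(C) + r − 1 ≤ d_r(C) ≤ trk(C) − k + r. -/

import Mathlib

open Matrix

/-- The minimum (rank) distance of a rank-metric code. -/
noncomputable def minRankDist {F : Type*} [Field F] {n m : ℕ}
    (C : Submodule F (Matrix (Fin n) (Fin m) F)) : ℕ :=
  sInf {r : ℕ | ∃ M ∈ C, M ≠ 0 ∧ M.rank = r}

/-- The tensor rank of a rank-metric code `C`: the least `R` such that `C` is
contained in the span of `R` rank-one matrices. -/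
noncomputable def trkCode {F : Type*} [Field F] {n m : ℕ}
    (C : Submodule F (Matrix (Fin n) (Fin m) F)) : ℕ :=
  sInf {R : ℕ | ∃ A : Fin R → Matrix (Fin n) (Fin m) F,
    (∀ r, (A r).rank = 1) ∧ C ≤ Submodule.span F (Set.range A)}

/-- The `r`-th generalized tensor rank of a rank-metric code `C`: the least dimension
of a subspace `U` spanned by rank-one matrices with `dim(C ⊓ U) ≥ r`. -/
noncomputable def genTensorRank {F : Type*} [Field F] {n m : ℕ}
    (C : Submodule F (Matrix (Fin n) (Fin m) F)) (r : ℕ) : ℕ :=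
  sInf {s : ℕ | ∃ U : Submodule F (Matrix (Fin n) (Fin m) F),
    (∃ S : Set (Matrix (Fin n) (Fin m) F), (∀ M ∈ S, M.rank = 1) ∧
      U = Submodule.span F S) ∧
    r ≤ Module.finrank F ↥(C ⊓ U) ∧ Module.finrank F ↥U = s}

section Aux

variable {F : Type*} [Field F] {n m : ℕ}

private lemma rank_add_le' (A B : Matrix (Fin n) (Fin m) F) :
    (A + B).rank ≤ A.rank + B.rank := by
  have hr : LinearMap.range (A + B).mulVecLin ≤
      LinearMap.range A.mulVecLin ⊔ LinearMap.range B.mulVecLin := by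
    rintro x ⟨v, rfl⟩
    rw [mulVecLin_apply, add_mulVec]
    exact Submodule.add_mem_sup ⟨v, by simp [mulVecLin_apply]⟩ ⟨v, by simp [mulVecLin_apply]⟩
  calc (A + B).rank = Module.finrank F ↥(LinearMap.range (A + B).mulVecLin) := rfl
    _ ≤ Module.finrank F ↥(LinearMap.range A.mulVecLin ⊔ LinearMap.range B.mulVecLin) :=
        Submodule.finrank_mono hr
    _ ≤ A.rank + B.rank := Submodule.finrank_add_le_finrank_add_finrank _ _

private lemma rank_smul_le' (c : F) (A : Matrix (Fin n) (Fin m) F) :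
    (c • A).rank ≤ A.rank := by
  have hr : LinearMap.range (c • A).mulVecLin ≤ LinearMap.range A.mulVecLin := by
    rintro x ⟨v, rfl⟩
    rw [mulVecLin_apply, smul_mulVec]
    exact Submodule.smul_mem _ _ ⟨v, by simp [mulVecLin_apply]⟩
  exact Submodule.finrank_mono hr

private lemma rank_sum_le' {ι : Type*} (s : Finset ι) (g : ι → Matrix (Fin n) (Fin m) F) :
    (∑ i ∈ s, g i).rank ≤ ∑ i ∈ s, (g i).rank := by
  classical
  induction s using Finset.induction with
  | empty => simp
  | @insert a s ha ih =>
      rw [Finset.sum_insert ha, Finset.sum_insert ha]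
      exact (rank_add_le' _ _).trans (Nat.add_le_add_left ih _)

private lemma rank_le_card_of_mem_span' (s : Finset (Matrix (Fin n) (Fin m) F))
    (h1 : ∀ A ∈ s, (A : Matrix (Fin n) (Fin m) F).rank ≤ 1)
    {M : Matrix (Fin n) (Fin m) F}
    (hM : M ∈ Submodule.span F (s : Set (Matrix (Fin n) (Fin m) F))) :
    M.rank ≤ s.card := by
  obtain ⟨f, -, rfl⟩ := Submodule.mem_span_finset.1 hM
  calc (∑ i ∈ s, f i • i).rank ≤ ∑ i ∈ s, (f i • i).rank := rank_sum_le' _ _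
    _ ≤ ∑ _i ∈ s, 1 := Finset.sum_le_sum fun i hi => (rank_smul_le' _ _).trans (h1 i hi)
    _ = s.card := by simp

private lemma rank_stdBasisMatrix_one (i : Fin n) (j : Fin m) :
    (Matrix.single i j (1 : F)).rank = 1 := by
  refine le_antisymm ?_ ?_
  · have hfac : Matrix.single i j (1 : F) =
        (Matrix.of fun a (_ : Fin 1) => if a = i then (1 : F) else 0) *
        (Matrix.of fun (_ : Fin 1) b => if b = j then (1 : F) else 0) := by
      ext a b
      simp only [Matrix.mul_apply, Matrix.of_apply, Fin.sum_univ_one, Matrix.single]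
      split_ifs <;> simp_all
    rw [hfac]
    exact (Matrix.rank_mul_le_left _ _).trans
      ((Matrix.rank_le_card_width _).trans (by simp))
  · have hmem : (Pi.single i (1 : F) : Fin n → F) ∈
        LinearMap.range (Matrix.single i j (1 : F)).mulVecLin := by
      refine ⟨Pi.single j 1, ?_⟩
      rw [mulVecLin_apply, single_mulVec]
      simp [Pi.single]
    have hne : (⟨_, hmem⟩ : ↥(LinearMap.range (Matrix.single i j (1 : F)).mulVecLin)) ≠ 0 := by
      intro h
      have h2 : (Pi.single i (1 : F) : Fin n → F) = 0 := congrArg Subtype.val h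
      have := congrFun h2 i
      simp at this
    have : 0 < Module.finrank F ↥(LinearMap.range (Matrix.single i j (1 : F)).mulVecLin) :=
      Module.finrank_pos_iff_exists_ne_zero.mpr ⟨_, hne⟩
    exact this

private lemma span_stdBasis_top :
    Submodule.span F (Set.range fun p : Fin n × Fin m =>
      Matrix.single p.1 p.2 (1 : F)) = ⊤ := by
  rw [eq_top_iff]
  rintro x -
  rw [Matrix.matrix_eq_sum_single x]
  refine Submodule.sum_mem _ fun i _ => Submodule.sum_mem _ fun j _ => ?_
  have h : Matrix.single i j (x i j) = x i j • Matrix.single i j (1 : F) := by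
    rw [Matrix.smul_single, smul_eq_mul, mul_one]
  rw [h]
  exact Submodule.smul_mem _ _ (Submodule.subset_span ⟨(i, j), rfl⟩)

end Aux

/-- Bounds on the generalized tensor ranks of a rank-metric code of dimension `k ≥ 1`:
`d(C) + r - 1 ≤ d_r(C) ≤ trk(C) - k + r` for `1 ≤ r ≤ k`. -/
theorem genTensorRank_bounds {F : Type*} [Field F] [Fintype F] {n m : ℕ}
    (C : Submodule F (Matrix (Fin n) (Fin m) F)) (hk : 1 ≤ Module.finrank F C) :
    ∀ r : ℕ, 1 ≤ r → r ≤ Module.finrank F C →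
      minRankDist C + r - 1 ≤ genTensorRank C r ∧
      genTensorRank C r ≤ trkCode C - Module.finrank F C + r := by
  classical
  intro r hr1 hrk
  -- notation for the three defining sets
  set k := Module.finrank F C with hkdef
  -- the set defining trkCode is nonempty
  have hTSne : {R : ℕ | ∃ A : Fin R → Matrix (Fin n) (Fin m) F,
      (∀ r, (A r).rank = 1) ∧ C ≤ Submodule.span F (Set.range A)}.Nonempty := by
    refine ⟨n * m, fun p => Matrix.single (finProdFinEquiv.symm p).1
      (finProdFinEquiv.symm p).2 (1 : F), fun p => rank_stdBasisMatrix_one _ _, ?_⟩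
    have hrange : (Set.range fun p : Fin (n * m) => Matrix.single (finProdFinEquiv.symm p).1
        (finProdFinEquiv.symm p).2 (1 : F)) =
        Set.range fun q : Fin n × Fin m => Matrix.single q.1 q.2 (1 : F) :=
      (finProdFinEquiv.symm.surjective).range_comp
        (fun q : Fin n × Fin m => Matrix.single q.1 q.2 (1 : F))
    rw [hrange, span_stdBasis_top]
    exact le_top
  obtain ⟨A, hA1, hA2⟩ : ∃ A : Fin (trkCode C) → Matrix (Fin n) (Fin m) F,
      (∀ i, (A i).rank = 1) ∧ C ≤ Submodule.span F (Set.range A) := by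
    unfold trkCode
    exact Nat.sInf_mem hTSne
  -- k ≤ trkCode C
  have hspanA : Module.finrank F ↥(Submodule.span F (Set.range A)) ≤ trkCode C := by
    simpa [Set.finrank] using finrank_range_le_card (R := F) A
  have hkR : k ≤ trkCode C := le_trans (Submodule.finrank_mono hA2) hspanA
  set t := k - r with htdef
  have htr : r + t = k := by omega
  have htR : t ≤ trkCode C := by omega
  -- construct the witness subspace W
  set W : Submodule F (Matrix (Fin n) (Fin m) F) :=
    Submodule.span F (Set.range fun i : Fin (trkCode C - t) =>
      A (Fin.castLE (Nat.sub_le _ _) i)) with hWdef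
  set D : Submodule F (Matrix (Fin n) (Fin m) F) :=
    Submodule.span F (Set.range fun j : Fin t =>
      A ⟨trkCode C - t + j.1, by have := j.2; omega⟩) with hDdef
  have hsub : Submodule.span F (Set.range A) ≤ W ⊔ D := by
    rw [Submodule.span_le]
    rintro x ⟨i, rfl⟩
    by_cases hi : i.1 < trkCode C - t
    · refine Submodule.mem_sup_left (Submodule.subset_span ⟨⟨i.1, hi⟩, ?_⟩)
      exact congrArg A (Fin.ext rfl)
    · refine Submodule.mem_sup_right (Submodule.subset_span
        ⟨⟨i.1 - (trkCode C - t), by have := i.2; omega⟩, ?_⟩)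
      exact congrArg A (Fin.ext (by have := i.2; simp; omega))
  have hW : Module.finrank F ↥W ≤ trkCode C - t := by
    simpa [Set.finrank] using finrank_range_le_card (R := F)
      (fun i : Fin (trkCode C - t) => A (Fin.castLE (Nat.sub_le _ _) i))
  have hD : Module.finrank F ↥D ≤ t := by
    simpa [Set.finrank] using finrank_range_le_card (R := F)
      (fun j : Fin t => A ⟨trkCode C - t + j.1, by have := j.2; omega⟩)
  have hCW_sup : Module.finrank F ↥(C ⊔ W) ≤ Module.finrank F ↥W + t := by
    have h1 : C ⊔ W ≤ W ⊔ D := sup_le (le_trans hA2 hsub) le_sup_left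
    exact (Submodule.finrank_mono h1).trans
      ((Submodule.finrank_add_le_finrank_add_finrank _ _).trans (by omega))
  have heq : Module.finrank F ↥(C ⊔ W) + Module.finrank F ↥(C ⊓ W) =
      k + Module.finrank F ↥W := Submodule.finrank_sup_add_finrank_inf_eq C W
  have hrW : r ≤ Module.finrank F ↥(C ⊓ W) := by omega
  -- W is spanned by rank-one matrices, so finrank W belongs to the defining set
  have hWmem : Module.finrank F ↥W ∈ {s : ℕ | ∃ U : Submodule F (Matrix (Fin n) (Fin m) F),
      (∃ S : Set (Matrix (Fin n) (Fin m) F), (∀ M ∈ S, M.rank = 1) ∧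
        U = Submodule.span F S) ∧
      r ≤ Module.finrank F ↥(C ⊓ U) ∧ Module.finrank F ↥U = s} := by
    refine ⟨W, ⟨Set.range fun i : Fin (trkCode C - t) =>
      A (Fin.castLE (Nat.sub_le _ _) i), ?_, hWdef⟩, hrW, rfl⟩
    rintro M ⟨i, rfl⟩
    exact hA1 _
  have hSGne : {s : ℕ | ∃ U : Submodule F (Matrix (Fin n) (Fin m) F),
      (∃ S : Set (Matrix (Fin n) (Fin m) F), (∀ M ∈ S, M.rank = 1) ∧
        U = Submodule.span F S) ∧
      r ≤ Module.finrank F ↥(C ⊓ U) ∧ Module.finrank F ↥U = s}.Nonempty := ⟨_, hWmem⟩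
  constructor
  · -- lower bound
    refine le_csInf hSGne ?_
    rintro s ⟨U, ⟨S, hS1, hUS⟩, hrU, hUs⟩
    subst hUS
    obtain ⟨B, hBS, hBspan, hBli⟩ := exists_linearIndependent F S
    have hBfin : B.Finite := hBli.setFinite
    haveI := hBfin.fintype
    have hfinU : Module.finrank F ↥(Submodule.span F S) = B.toFinset.card := by
      rw [← hBspan]
      exact finrank_span_set_eq_card hBli
    have hs_eq : s = B.toFinset.card := by rw [← hUs, hfinU]
    have hrs : r ≤ s := by
      rw [← hUs]
      exact le_trans hrU (Submodule.finrank_mono inf_le_right)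
    obtain ⟨B₂, hB₂sub, hB₂card⟩ :=
      Finset.exists_subset_card_eq (show r - 1 ≤ B.toFinset.card by omega)
    set B₁ : Finset (Matrix (Fin n) (Fin m) F) := B.toFinset \ B₂ with hB₁def
    have hB₁card : B₁.card = s - (r - 1) := by
      rw [hB₁def, Finset.card_sdiff_of_subset hB₂sub, hB₂card, hs_eq]
    have hB₁B : (B₁ : Set (Matrix (Fin n) (Fin m) F)) ⊆ B := by
      intro x hx
      have : x ∈ B.toFinset := (Finset.sdiff_subset) hx
      simpa using this
    set U' : Submodule F (Matrix (Fin n) (Fin m) F) :=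
      Submodule.span F (B₁ : Set (Matrix (Fin n) (Fin m) F)) with hU'def
    have hU'le : U' ≤ Submodule.span F S := by
      rw [hU'def, ← hBspan]
      exact Submodule.span_mono hB₁B
    have hU'rank : Module.finrank F ↥U' = B₁.card := by
      rw [hU'def]
      exact finrank_span_finset_eq_card ((show LinearIndepOn F id B from hBli).mono hB₁B)
    have hsup_le : Module.finrank F ↥((C ⊓ Submodule.span F S) ⊔ U') ≤ s := by
      rw [← hUs]
      exact Submodule.finrank_mono (sup_le inf_le_right hU'le)
    have heq2 : Module.finrank F ↥((C ⊓ Submodule.span F S) ⊔ U') +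
        Module.finrank F ↥((C ⊓ Submodule.span F S) ⊓ U') =
        Module.finrank F ↥(C ⊓ Submodule.span F S) + Module.finrank F ↥U' :=
      Submodule.finrank_sup_add_finrank_inf_eq _ _
    have hpos : 0 < Module.finrank F ↥((C ⊓ Submodule.span F S) ⊓ U') := by omega
    obtain ⟨x, hx0⟩ := Module.finrank_pos_iff_exists_ne_zero.mp hpos
    have hx2 := x.2
    rw [Submodule.mem_inf, Submodule.mem_inf] at hx2
    have hM0 : x.1 ≠ 0 := by
      intro h
      exact hx0 (Subtype.ext h)
    have hd_le : minRankDist C ≤ (x.1 : Matrix (Fin n) (Fin m) F).rank :=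
      Nat.sInf_le ⟨_, hx2.1.1, hM0, rfl⟩
    have hrank_le : (x.1 : Matrix (Fin n) (Fin m) F).rank ≤ B₁.card := by
      refine rank_le_card_of_mem_span' B₁ ?_ hx2.2
      intro A hA
      exact le_of_eq (hS1 A (hBS (hB₁B hA)))
    omega
  · -- upper bound
    have hub : genTensorRank C r ≤ Module.finrank F ↥W := Nat.sInf_le hWmem
    have : Module.finrank F ↥W ≤ trkCode C - k + r := by omega
    omega
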